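/- Flatness of Chern's metric: let U ⊆ ℂ be open, let (f, g) be Weierstrass data on U with moreover g(z) ≠ 0 for every z ∈ U, and set 1 + N_V(z) = 2|g(z)|²/(1 + |g(z)|²) (the angle function for V = (0, 0, 1) shifted by 1). Then the function z ↦ ln((1 + N_V(z)) λ(z)) is harmonic on U, i.e. Δ(ln((1 + N_V) λ)) = 0 on U. (Since the Gauss curvature of a conformal metric μ²(dx² + dy²) is −μ⁻²Δ ln μ, this says that Chern's conformally changed metric 𝒢_Chern = (1 + N_V)² λ²(dx² + dy²) is flat.) -/

import Mathlib

/-- The flat Laplacian `Δ = ∂²/∂x² + ∂²/∂y²` on `ℂ ≃ ℝ²`, where the `x`-direction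
is `1 : ℂ` and the `y`-direction is `I : ℂ`. -/
noncomputable def flatLaplacian (F : ℂ → ℝ) (z : ℂ) : ℝ :=
  fderiv ℝ (fun w => fderiv ℝ F w 1) z 1 +
    fderiv ℝ (fun w => fderiv ℝ F w Complex.I) z Complex.I

lemma fderiv_re_apply (H : ℂ → ℂ) (w v : ℂ) (hd : DifferentiableAt ℂ H w) :
    fderiv ℝ (fun w => (H w).re) w v = (v * deriv H w).re := by
  have h1 : HasFDerivAt H
      (ContinuousLinearMap.smulRight (1 : ℂ →L[ℂ] ℂ) (deriv H w)) w :=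
    hd.hasDerivAt.hasFDerivAt
  have h2 : HasFDerivAt (fun w => (H w).re)
      (Complex.reCLM.comp (ContinuousLinearMap.restrictScalars ℝ
        (ContinuousLinearMap.smulRight (1 : ℂ →L[ℂ] ℂ) (deriv H w)))) w :=
    Complex.reCLM.hasFDerivAt.comp w (h1.restrictScalars ℝ)
  rw [h2.fderiv]
  simp [smul_eq_mul]

lemma flatLaplacian_congr {F G : ℂ → ℝ} {z : ℂ} (h : F =ᶠ[nhds z] G) :
    flatLaplacian F z = flatLaplacian G z := by
  unfold flatLaplacian
  have h1 : fderiv ℝ F =ᶠ[nhds z] fderiv ℝ G := h.fderiv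
  have e1 : (fun w => fderiv ℝ F w 1) =ᶠ[nhds z] fun w => fderiv ℝ G w 1 :=
    h1.mono fun w hw => by simp only [hw]
  have e2 : (fun w => fderiv ℝ F w Complex.I) =ᶠ[nhds z]
      fun w => fderiv ℝ G w Complex.I := h1.mono fun w hw => by simp only [hw]
  rw [e1.fderiv_eq, e2.fderiv_eq]

lemma re_holo_harmonic (H : ℂ → ℂ) (V : Set ℂ) (hV : IsOpen V)
    (hH : DifferentiableOn ℂ H V) {z : ℂ} (hz : z ∈ V) :
    flatLaplacian (fun w => (H w).re) z = 0 := by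
  have hH' : DifferentiableOn ℂ (deriv H) V :=
    ((hH.analyticOnNhd hV).deriv).differentiableOn
  have hmem : V ∈ nhds z := hV.mem_nhds hz
  have e1 : (fun w => fderiv ℝ (fun w => (H w).re) w 1) =ᶠ[nhds z]
      fun w => ((1 : ℂ) * deriv H w).re := by
    filter_upwards [hmem] with w hw
    exact fderiv_re_apply H w 1 (hH.differentiableAt (hV.mem_nhds hw))
  have e2 : (fun w => fderiv ℝ (fun w => (H w).re) w Complex.I) =ᶠ[nhds z]
      fun w => (Complex.I * deriv H w).re := by
    filter_upwards [hmem] with w hw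
    exact fderiv_re_apply H w Complex.I (hH.differentiableAt (hV.mem_nhds hw))
  have hdz : DifferentiableAt ℂ (deriv H) z := hH'.differentiableAt hmem
  unfold flatLaplacian
  rw [e1.fderiv_eq, e2.fderiv_eq]
  have t1 : fderiv ℝ (fun w => ((1 : ℂ) * deriv H w).re) z 1
      = ((1 : ℂ) * deriv (fun w => (1 : ℂ) * deriv H w) z).re := by
    exact fderiv_re_apply _ z 1 (hdz.const_mul _)
  have t2 : fderiv ℝ (fun w => (Complex.I * deriv H w).re) z Complex.I
      = (Complex.I * deriv (fun w => Complex.I * deriv H w) z).re := by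
    exact fderiv_re_apply _ z Complex.I (hdz.const_mul _)
  rw [t1, t2, deriv_const_mul _ hdz, deriv_const_mul _ hdz]
  set d := deriv (deriv H) z
  have : Complex.I * (Complex.I * d) = -d := by
    rw [← mul_assoc, Complex.I_mul_I, neg_one_mul]
  rw [this]
  simp

/-- Flatness of Chern's metric: for Weierstrass data `(f, g)` on an
open set `U ⊆ ℂ` with moreover `g ≠ 0` on `U`, with `λ = |f|(1 + |g|²)/2` and
`1 + N_V = 2|g|²/(1 + |g|²)` (the angle function for `V = (0,0,1)` shifted by 1),
the function `z ↦ ln((1 + N_V(z)) λ(z))` is harmonic on `U`: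
`Δ(ln((1 + N_V) λ)) = 0` on `U`.  This says that Chern's conformally changed
metric `𝒢_Chern = (1 + N_V)² λ²(dx² + dy²)` is flat. -/
theorem chern_metric_flat
    (U : Set ℂ) (hU : IsOpen U)
    (f g : ℂ → ℂ)
    (hf : DifferentiableOn ℂ f U) (hg : DifferentiableOn ℂ g U)
    (hf0 : ∀ z ∈ U, f z ≠ 0) (hg' : ∀ z ∈ U, deriv g z ≠ 0)
    (hg0 : ∀ z ∈ U, g z ≠ 0)
    (lam onePlusNv : ℂ → ℝ)
    (hlam : ∀ z, lam z = ‖f z‖ * (1 + ‖g z‖ ^ 2) / 2)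
    (hNv : ∀ z, onePlusNv z = 2 * ‖g z‖ ^ 2 / (1 + ‖g z‖ ^ 2)) :
    ∀ z ∈ U,
      flatLaplacian (fun w => Real.log (onePlusNv w * lam w)) z = 0 := by
  intro z hz
  set h : ℂ → ℂ := fun w => f w * g w ^ 2 with hh_def
  have hh : DifferentiableOn ℂ h U := hf.mul (hg.pow 2)
  have habs : ∀ w, onePlusNv w * lam w = ‖h w‖ := by
    intro w
    have hpos : (0:ℝ) < 1 + ‖g w‖ ^ 2 := by positivity
    rw [hNv, hlam, hh_def]
    simp only [norm_mul, norm_pow]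
    field_simp
  have hhz : h z ≠ 0 := mul_ne_zero (hf0 z hz) (pow_ne_zero 2 (hg0 z hz))
  set c : ℂ := ((‖h z‖ : ℝ) : ℂ) / h z with hc_def
  have hchz : c * h z = ((‖h z‖ : ℝ) : ℂ) := by
    rw [hc_def, div_mul_cancel₀ _ hhz]
  have habsc : ‖c‖ = 1 := by
    rw [hc_def, norm_div, Complex.norm_of_nonneg (norm_nonneg _),
      div_self (norm_ne_zero_iff.mpr hhz)]
  set V : Set ℂ := U ∩ (fun w => c * h w) ⁻¹' Complex.slitPlane with hV_def
  have hVopen : IsOpen V := by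
    apply ContinuousOn.isOpen_inter_preimage _ hU Complex.isOpen_slitPlane
    exact (hh.continuousOn.const_smul c)
  have hzV : z ∈ V := by
    refine ⟨hz, ?_⟩
    simp only [Set.mem_preimage, hchz]
    refine Complex.mem_slitPlane_iff.2 (Or.inl ?_)
    simpa using norm_pos_iff.mpr hhz
  set H : ℂ → ℂ := fun w => Complex.log (c * h w) with hH_def
  have hHdiff : DifferentiableOn ℂ H V := by
    apply DifferentiableOn.clog
    · exact ((hh.mono Set.inter_subset_left).const_mul c)
    · intro x hx; exact hx.2
  have heq : (fun w => Real.log (onePlusNv w * lam w)) =ᶠ[nhds z]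
      fun w => (H w).re := by
    filter_upwards [hVopen.mem_nhds hzV] with w hw
    rw [habs, hH_def]
    simp only [Complex.log_re, norm_mul, habsc, one_mul]
  rw [flatLaplacian_congr heq]
  exact re_holo_harmonic H V hVopen hHdiff hzV
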